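/- Let X_1,...,X_n be 4-wise independent 0/1-valued random variables with σ_2 ≤ μ where μ = E(ΣX_i) and σ_k = Σ_i (E(X_i))^k, and suppose 12σ_3 ≤ 3μσ_2. Then E((X-μ)^4) ≤ μ + 3μ^2, where X = ΣX_i. -/

import Mathlib

open MeasureTheory ProbabilityTheory

/-- For 4-wise independent indicator random variables with `σ₂ ≤ μ` and `12σ₃ ≤ 3μσ₂`,
the fourth central moment is bounded: `E((X-μ)⁴) ≤ μ + 3μ²`. -/
theorem stmt4 {Ω : Type*} [MeasureSpace Ω] [IsProbabilityMeasure (ℙ : Measure Ω)]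
    (n : ℕ) (X : Fin n → Ω → ℝ)
    (hmeas : ∀ i, Measurable (X i))
    (h01 : ∀ i ω, X i ω = 0 ∨ X i ω = 1)
    (hind : ∀ i j k l : Fin n, i ≠ j → i ≠ k → i ≠ l → j ≠ k → j ≠ l → k ≠ l →
      iIndepFun ![X i, X j, X k, X l] ℙ)
    (μ σ₂ σ₃ : ℝ)
    (hμ : μ = ∫ ω, (∑ i, X i ω) ∂ℙ)
    (hσ₂ : σ₂ = ∑ i, (∫ ω, X i ω ∂ℙ) ^ 2)
    (hσ₃ : σ₃ = ∑ i, (∫ ω, X i ω ∂ℙ) ^ 3)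
    (hσ₂μ : σ₂ ≤ μ)
    (hσ₃μ : 12 * σ₃ ≤ 3 * μ * σ₂) :
    (∫ ω, ((∑ i, X i ω) - μ) ^ 4 ∂ℙ) ≤ μ + 3 * μ ^ 2 := by
  classical
  set p : Fin n → ℝ := fun i => ∫ ω, X i ω ∂ℙ with hp
  have hXint : ∀ i, Integrable (X i) ℙ := by
    intro i
    refine (integrable_const (1:ℝ)).mono' (hmeas i).aestronglyMeasurable ?_
    exact ae_of_all _ fun ω => by rcases h01 i ω with h | h <;> simp [h]
  have hpi : ∀ i, ∫ ω, X i ω ∂ℙ = p i := fun i => by rw [hp]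
  have hp0 : ∀ i, 0 ≤ p i := fun i =>
    integral_nonneg fun ω => by rcases h01 i ω with h | h <;> simp [h]
  have hp1 : ∀ i, p i ≤ 1 := by
    intro i
    have : ∫ ω, X i ω ∂ℙ ≤ ∫ _ω, (1:ℝ) ∂ℙ :=
      integral_mono (hXint i) (integrable_const 1)
        (fun ω => by rcases h01 i ω with h | h <;> simp [h])
    simpa using this
  have hμp : μ = ∑ i, p i := by
    rw [hμ, integral_finset_sum _ fun i _ => hXint i]
  have hσ₂p : σ₂ = ∑ i, p i ^ 2 := hσ₂
  have hσ₃p : σ₃ = ∑ i, p i ^ 3 := hσ₃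
  have hσ₂nonneg : 0 ≤ σ₂ := by
    rw [hσ₂p]; exact Finset.sum_nonneg fun i _ => sq_nonneg _
  rcases lt_or_ge n 4 with hn | hn
  · -- degenerate case: the hypotheses force all means to vanish
    have hσ₃nonneg : 0 ≤ σ₃ := by
      rw [hσ₃p]; exact Finset.sum_nonneg fun i _ => pow_nonneg (hp0 i) 3
    have cheb : μ * σ₂ ≤ (n : ℝ) * σ₃ := by
      rw [hμp, hσ₂p, hσ₃p]
      have mono : Monovary p (fun i => p i ^ 2) := by
        intro i j hij
        by_contra hc
        push_neg at hc
        exact absurd (pow_le_pow_left₀ (hp0 j) hc.le 2) (not_le.2 hij)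
      have h := mono.sum_mul_sum_le_card_mul_sum
      calc (∑ i, p i) * (∑ i, p i ^ 2)
          ≤ (Finset.univ.card : ℝ) * ∑ i, p i * p i ^ 2 := h
        _ = (n : ℝ) * ∑ i, p i ^ 3 := by
            rw [Finset.card_univ, Fintype.card_fin]
            congr 1
            exact Finset.sum_congr rfl fun i _ => by ring
    have hncast : (n : ℝ) ≤ 3 := by exact_mod_cast Nat.lt_succ_iff.mp hn
    have hσ₃0 : σ₃ = 0 := by
      nlinarith [cheb, hσ₃μ, hσ₃nonneg, hncast]
    have hpz : ∀ i, p i = 0 := by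
      intro i
      have hz : ∀ j ∈ Finset.univ, p j ^ 3 = 0 :=
        (Finset.sum_eq_zero_iff_of_nonneg
          (fun j _ => pow_nonneg (hp0 j) 3)).1 (by rw [← hσ₃p]; exact hσ₃0)
      have := hz i (Finset.mem_univ i)
      exact pow_eq_zero_iff (by norm_num) |>.1 this
    have hXz : ∀ i, X i =ᵐ[ℙ] 0 := by
      intro i
      refine (integral_eq_zero_iff_of_nonneg
        (fun ω => by rcases h01 i ω with h | h <;> simp [h]) (hXint i)).1 ?_
      exact hpz i
    have hμ0 : μ = 0 := by
      rw [hμp]; exact Finset.sum_eq_zero fun i _ => hpz i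
    have hall : ∀ᵐ ω ∂ℙ, ∀ i, X i ω = 0 := by
      rw [ae_all_iff]
      intro i
      filter_upwards [hXz i] with ω hω using hω
    have hae : (fun ω => ((∑ i, X i ω) - μ) ^ 4) =ᵐ[ℙ] (fun _ => (0:ℝ)) := by
      filter_upwards [hall] with ω hω
      simp [hω, hμ0]
    rw [integral_congr_ae hae]
    simp [hμ0]
  · -- main case `4 ≤ n`
    set Y : Fin n → Ω → ℝ := fun i ω => X i ω - p i with hY
    set v : Fin n → ℝ := fun i => p i - p i ^ 2 with hvdef
    set mm : Fin n → ℝ := fun i => ((1 - p i) ^ 4 - p i ^ 4) * p i + p i ^ 4 with hmmdef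
    set σ₄ : ℝ := ∑ i, p i ^ 4 with hσ₄def
    have hσ₄nonneg : 0 ≤ σ₄ :=
      Finset.sum_nonneg fun i _ => by positivity
    have hYm : ∀ i, Measurable (Y i) := fun i => (hmeas i).sub measurable_const
    have hYb : ∀ i ω, |Y i ω| ≤ 1 := by
      intro i ω
      rw [abs_le]
      rcases h01 i ω with h | h <;> simp only [hY, h] <;>
        constructor <;> linarith [hp0 i, hp1 i]
    have mul1 : ∀ x y : ℝ, |x| ≤ 1 → |y| ≤ 1 → |x * y| ≤ 1 := by
      intro x y hx hy
      rw [abs_mul]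
      nlinarith [abs_nonneg x, abs_nonneg y]
    have pow1 : ∀ (x : ℝ) (q : ℕ), |x| ≤ 1 → |x ^ q| ≤ 1 := by
      intro x q hx
      rw [abs_pow]
      exact pow_le_one₀ (abs_nonneg x) hx
    have hbdd : ∀ f : Ω → ℝ, Measurable f → (∀ ω, |f ω| ≤ 1) → Integrable f ℙ := by
      intro f hf hb
      exact (integrable_const (1:ℝ)).mono' hf.aestronglyMeasurable
        (ae_of_all _ fun ω => by simpa using hb ω)
    have hIq : ∀ (a : Fin n) (q : ℕ), Integrable (fun ω => (Y a ω) ^ q) ℙ := fun a q =>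
      hbdd _ ((hYm a).pow_const q) fun ω => pow1 _ q (hYb a ω)
    have hI11 : ∀ a b, Integrable (fun ω => Y a ω * Y b ω) ℙ := fun a b =>
      hbdd _ ((hYm a).mul (hYm b)) fun ω => mul1 _ _ (hYb a ω) (hYb b ω)
    have hI21 : ∀ a b, Integrable (fun ω => (Y a ω) ^ 2 * Y b ω) ℙ := fun a b =>
      hbdd _ (((hYm a).pow_const 2).mul (hYm b))
        fun ω => mul1 _ _ (pow1 _ 2 (hYb a ω)) (hYb b ω)
    have hI4 : ∀ a b c d, Integrable (fun ω => Y a ω * Y b ω * Y c ω * Y d ω) ℙ := fun a b c d =>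
      hbdd _ ((((hYm a).mul (hYm b)).mul (hYm c)).mul (hYm d))
        fun ω => mul1 _ _ (mul1 _ _ (mul1 _ _ (hYb a ω) (hYb b ω)) (hYb c ω)) (hYb d ω)
    have hEY : ∀ i, ∫ ω, Y i ω ∂ℙ = 0 := by
      intro i
      simp only [hY]
      rw [integral_sub (hXint i) (integrable_const _)]
      simp [hp]
    have hv : ∀ i, ∫ ω, (Y i ω) ^ 2 ∂ℙ = v i := by
      intro i
      have e : (fun ω => (Y i ω) ^ 2) = fun ω => (1 - 2 * p i) * X i ω + p i ^ 2 := by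
        funext ω
        rcases h01 i ω with h | h <;> simp only [hY, h] <;> ring
      rw [e, integral_add ((hXint i).const_mul _) (integrable_const _),
        integral_const_mul, integral_const, hpi i]
      simp only [hvdef, measure_univ, ENNReal.toReal_one, smul_eq_mul, one_mul, probReal_univ]
      ring
    have hm4 : ∀ i, ∫ ω, (Y i ω) ^ 4 ∂ℙ = mm i := by
      intro i
      have e : (fun ω => (Y i ω) ^ 4)
          = fun ω => ((1 - p i) ^ 4 - p i ^ 4) * X i ω + p i ^ 4 := by
        funext ω
        rcases h01 i ω with h | h <;> simp only [hY, h] <;> ring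
      rw [e, integral_add ((hXint i).const_mul _) (integrable_const _),
        integral_const_mul, integral_const, hpi i]
      simp only [hmmdef, measure_univ, ENNReal.toReal_one, smul_eq_mul, one_mul, probReal_univ]
    -- picking fresh indices
    have fresh : ∀ s : Finset (Fin n), s.card ≤ 3 → ∃ c, c ∉ s := by
      intro s hs
      by_contra h
      push_neg at h
      have hsub : (Finset.univ : Finset (Fin n)) ⊆ s := fun x _ => h x
      have := Finset.card_le_card hsub
      simp [Finset.card_univ] at this
      omega
    have hmtuple : ∀ a b c d : Fin n, ∀ i, Measurable (![X a, X b, X c, X d] i) := by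
      intro a b c d i
      fin_cases i <;> simp <;> exact hmeas _
    have hpair : ∀ a b, a ≠ b → IndepFun (X a) (X b) ℙ := by
      intro a b hab
      obtain ⟨c, hc⟩ := fresh {a, b} ((Finset.card_insert_le _ _).trans (by simp))
      obtain ⟨d, hd⟩ := fresh {a, b, c}
        ((Finset.card_insert_le _ _).trans (by
          have := Finset.card_insert_le b ({c} : Finset (Fin n)); simp at this ⊢; omega))
      simp only [Finset.mem_insert, Finset.mem_singleton, not_or] at hc hd
      have h4 := hind a b c d hab (Ne.symm hc.1) (Ne.symm hd.1) (Ne.symm hc.2)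
        (Ne.symm hd.2.1) (Ne.symm hd.2.2)
      have := h4.indepFun (i := 0) (j := 1) (by decide)
      simpa using this
    have htrip : ∀ a b c, a ≠ b → a ≠ c → b ≠ c →
        IndepFun (fun ω => (X a ω, X b ω)) (X c) ℙ := by
      intro a b c hab hac hbc
      obtain ⟨d, hd⟩ := fresh {a, b, c}
        ((Finset.card_insert_le _ _).trans (by
          have := Finset.card_insert_le b ({c} : Finset (Fin n)); simp at this ⊢; omega))
      simp only [Finset.mem_insert, Finset.mem_singleton, not_or] at hd
      have h4 := hind a b c d hab hac (Ne.symm hd.1) hbc (Ne.symm hd.2.1) (Ne.symm hd.2.2)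
      have := h4.indepFun_prodMk (hmtuple a b c d) 0 1 2 (by decide) (by decide)
      simpa using this
    have hquad : ∀ a b c d, a ≠ b → a ≠ c → a ≠ d → b ≠ c → b ≠ d → c ≠ d →
        IndepFun (fun ω => (X a ω, X b ω)) (fun ω => (X c ω, X d ω)) ℙ := by
      intro a b c d hab hac had hbc hbd hcd
      have h4 := hind a b c d hab hac had hbc hbd hcd
      have := h4.indepFun_prodMk_prodMk (hmtuple a b c d) 0 1 2 3
        (by decide) (by decide) (by decide) (by decide)
      simpa using this
    -- splitting lemmas for integrals of products
    have hsplit2 : ∀ (a b : Fin n) (q r : ℕ), a ≠ b →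
        ∫ ω, (Y a ω) ^ q * (Y b ω) ^ r ∂ℙ
          = (∫ ω, (Y a ω) ^ q ∂ℙ) * (∫ ω, (Y b ω) ^ r ∂ℙ) := by
      intro a b q r hab
      have hc : IndepFun (fun ω => (Y a ω) ^ q) (fun ω => (Y b ω) ^ r) ℙ :=
        (hpair a b hab).comp ((measurable_id.sub_const (p a)).pow_const q)
          ((measurable_id.sub_const (p b)).pow_const r)
      have := hc.integral_mul_eq_mul_integral (hIq a q).aestronglyMeasurable (hIq b r).aestronglyMeasurable
      simpa [Pi.mul_apply] using this
    have hsplit3 : ∀ a b c : Fin n, a ≠ b → a ≠ c → b ≠ c →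
        ∫ ω, (Y a ω) ^ 2 * Y b ω * Y c ω ∂ℙ = 0 := by
      intro a b c hab hac hbc
      have hφ : Measurable (fun z : ℝ × ℝ => (z.1 - p a) ^ 2 * (z.2 - p b)) := by fun_prop
      have hc : IndepFun (fun ω => (Y a ω) ^ 2 * Y b ω) (Y c) ℙ :=
        (htrip a b c hab hac hbc).comp hφ (measurable_id.sub_const (p c))
      have := hc.integral_mul_eq_mul_integral (hI21 a b).aestronglyMeasurable
        (hbdd _ (hYm c) (hYb c)).aestronglyMeasurable
      rw [hEY c, mul_zero] at this
      simpa [Pi.mul_apply] using this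
    have hsplit4 : ∀ a b c d : Fin n, a ≠ b → a ≠ c → a ≠ d → b ≠ c → b ≠ d → c ≠ d →
        ∫ ω, Y a ω * Y b ω * (Y c ω * Y d ω) ∂ℙ = 0 := by
      intro a b c d hab hac had hbc hbd hcd
      have hφ : Measurable (fun z : ℝ × ℝ => (z.1 - p a) * (z.2 - p b)) := by fun_prop
      have hψ : Measurable (fun z : ℝ × ℝ => (z.1 - p c) * (z.2 - p d)) := by fun_prop
      have hc : IndepFun (fun ω => Y a ω * Y b ω) (fun ω => Y c ω * Y d ω) ℙ :=
        (hquad a b c d hab hac had hbc hbd hcd).comp hφ hψ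
      have h2 := hc.integral_mul_eq_mul_integral (hI11 a b).aestronglyMeasurable (hI11 c d).aestronglyMeasurable
      have hab0 : ∫ ω, Y a ω * Y b ω ∂ℙ = 0 := by
        have := hsplit2 a b 1 1 hab
        simpa [pow_one, hEY a] using this
      rw [Pi.mul_def] at h2
      simpa [hab0] using h2
    set F : Fin n → Fin n → Fin n → Fin n → ℝ := fun i j k l =>
      (if i = j ∧ k = l then v i * v k else 0) +
      (if i = k ∧ j = l then v i * v j else 0) +
      (if i = l ∧ j = k then v i * v j else 0) +
      (if i = j ∧ i = k ∧ i = l then mm i - 3 * v i ^ 2 else 0) with hF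
    have key : ∀ i j k l, ∫ ω, Y i ω * Y j ω * Y k ω * Y l ω ∂ℙ = F i j k l := by
      intro i j k l
      by_cases hij : i = j
      · subst hij
        by_cases hkl : k = l
        · subst hkl
          by_cases hik : i = k
          · subst hik
            rw [show (fun ω => Y i ω * Y i ω * Y i ω * Y i ω) = fun ω => (Y i ω) ^ 4 from
              funext fun ω => by ring]
            rw [hm4 i]
            simp only [hF, and_self, if_true]
            ring
          · rw [show (fun ω => Y i ω * Y i ω * Y k ω * Y k ω)
                = fun ω => (Y i ω) ^ 2 * (Y k ω) ^ 2 from funext fun ω => by ring]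
            rw [hsplit2 i k 2 2 hik, hv i, hv k]
            simp [hF, hik]
        · by_cases hik : i = k
          · subst hik
            have hil : i ≠ l := hkl
            rw [show (fun ω => Y i ω * Y i ω * Y i ω * Y l ω)
                = fun ω => (Y i ω) ^ 3 * (Y l ω) ^ 1 from funext fun ω => by ring]
            rw [hsplit2 i l 3 1 hil]
            have h1 : ∫ ω, (Y l ω) ^ 1 ∂ℙ = 0 := by simpa [pow_one] using hEY l
            rw [h1, mul_zero]
            simp [hF, hkl, hil]
          · by_cases hil : i = l
            · subst hil
              have hki : k ≠ i := fun h => hik h.symm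
              rw [show (fun ω => Y i ω * Y i ω * Y k ω * Y i ω)
                  = fun ω => (Y i ω) ^ 3 * (Y k ω) ^ 1 from funext fun ω => by ring]
              rw [hsplit2 i k 3 1 hik]
              have h1 : ∫ ω, (Y k ω) ^ 1 ∂ℙ = 0 := by simpa [pow_one] using hEY k
              rw [h1, mul_zero]
              simp [hF, hik, hkl]
            · rw [show (fun ω => Y i ω * Y i ω * Y k ω * Y l ω)
                  = fun ω => (Y i ω) ^ 2 * Y k ω * Y l ω from funext fun ω => by ring]
              rw [hsplit3 i k l hik hil hkl]
              simp [hF, hik, hil, hkl]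
      · by_cases hkl : k = l
        · subst hkl
          by_cases hik : i = k
          · subst hik
            rw [show (fun ω => Y i ω * Y j ω * Y i ω * Y i ω)
                = fun ω => (Y i ω) ^ 3 * (Y j ω) ^ 1 from funext fun ω => by ring]
            rw [hsplit2 i j 3 1 hij]
            have h1 : ∫ ω, (Y j ω) ^ 1 ∂ℙ = 0 := by simpa [pow_one] using hEY j
            rw [h1, mul_zero]
            simp [hF, hij, Ne.symm hij]
          · by_cases hjk : j = k
            · subst hjk
              rw [show (fun ω => Y i ω * Y j ω * Y j ω * Y j ω)
                  = fun ω => (Y j ω) ^ 3 * (Y i ω) ^ 1 from funext fun ω => by ring]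
              rw [hsplit2 j i 3 1 (fun h => hij h.symm)]
              have h1 : ∫ ω, (Y i ω) ^ 1 ∂ℙ = 0 := by simpa [pow_one] using hEY i
              rw [h1, mul_zero]
              simp [hF, hij, hik]
            · rw [show (fun ω => Y i ω * Y j ω * Y k ω * Y k ω)
                  = fun ω => (Y k ω) ^ 2 * Y i ω * Y j ω from funext fun ω => by ring]
              rw [hsplit3 k i j (fun h => hik h.symm) (fun h => hjk h.symm) hij]
              simp [hF, hij, hik, hjk]
        · by_cases hik : i = k
          · subst hik
            have hil : i ≠ l := hkl
            by_cases hjl : j = l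
            · subst hjl
              rw [show (fun ω => Y i ω * Y j ω * Y i ω * Y j ω)
                  = fun ω => (Y i ω) ^ 2 * (Y j ω) ^ 2 from funext fun ω => by ring]
              rw [hsplit2 i j 2 2 hij, hv i, hv j]
              simp [hF, hij, hil]
            · rw [show (fun ω => Y i ω * Y j ω * Y i ω * Y l ω)
                  = fun ω => (Y i ω) ^ 2 * Y j ω * Y l ω from funext fun ω => by ring]
              rw [hsplit3 i j l hij hil hjl]
              simp [hF, hij, hil, hjl]
          · by_cases hil : i = l
            · subst hil
              have hki : k ≠ i := fun h => hik h.symm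
              by_cases hjk : j = k
              · subst hjk
                rw [show (fun ω => Y i ω * Y j ω * Y j ω * Y i ω)
                    = fun ω => (Y i ω) ^ 2 * (Y j ω) ^ 2 from funext fun ω => by ring]
                rw [hsplit2 i j 2 2 hij, hv i, hv j]
                simp [hF, hij, hik]
              · rw [show (fun ω => Y i ω * Y j ω * Y k ω * Y i ω)
                    = fun ω => (Y i ω) ^ 2 * Y j ω * Y k ω from funext fun ω => by ring]
                rw [hsplit3 i j k hij hik hjk]
                simp [hF, hij, hik, hjk]
            · by_cases hjk : j = k
              · subst hjk
                have hjl : j ≠ l := hkl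
                rw [show (fun ω => Y i ω * Y j ω * Y j ω * Y l ω)
                    = fun ω => (Y j ω) ^ 2 * Y i ω * Y l ω from funext fun ω => by ring]
                rw [hsplit3 j i l (fun h => hij h.symm) hjl hil]
                simp [hF, hij, hil, hjl]
              · by_cases hjl : j = l
                · subst hjl
                  rw [show (fun ω => Y i ω * Y j ω * Y k ω * Y j ω)
                      = fun ω => (Y j ω) ^ 2 * Y i ω * Y k ω from funext fun ω => by ring]
                  rw [hsplit3 j i k (fun h => hij h.symm) hjk hik]
                  simp [hF, hij, hik, hil, hjk]
                · rw [show (fun ω => Y i ω * Y j ω * Y k ω * Y l ω)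
                      = fun ω => Y i ω * Y j ω * (Y k ω * Y l ω) from
                      funext fun ω => by ring]
                  rw [hsplit4 i j k l hij hik hil hjk hjl hkl]
                  simp [hF, hij, hik, hil, hjk, hjl, hkl]
    -- sum of F over all quadruples
    have S1 : (∑ i, ∑ j, ∑ k, ∑ l, if i = j ∧ k = l then v i * v k else 0)
        = (∑ i, v i) ^ 2 := by
      have inner : ∀ i j k : Fin n, (∑ l, if i = j ∧ k = l then v i * v k else 0)
          = if i = j then v i * v k else 0 := by
        intro i j k
        by_cases h : i = j
        · simp [h, Finset.sum_ite_eq]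
        · simp [h]
      simp_rw [inner]
      have inner2 : ∀ i j : Fin n, (∑ k, if i = j then v i * v k else 0)
          = if i = j then v i * (∑ k, v k) else 0 := by
        intro i j
        by_cases h : i = j <;> simp [h, Finset.mul_sum]
      simp_rw [inner2, Finset.sum_ite_eq, Finset.mem_univ, if_true, ← Finset.sum_mul, sq]
    have S2 : (∑ i, ∑ j, ∑ k, ∑ l, if i = k ∧ j = l then v i * v j else 0)
        = (∑ i, v i) ^ 2 := by
      have inner : ∀ i j k : Fin n, (∑ l, if i = k ∧ j = l then v i * v j else 0)
          = if i = k then v i * v j else 0 := by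
        intro i j k
        by_cases h : i = k
        · simp [h, Finset.sum_ite_eq]
        · simp [h]
      simp_rw [inner, Finset.sum_ite_eq, Finset.mem_univ, if_true, ← Finset.mul_sum,
        ← Finset.sum_mul, sq]
    have S3 : (∑ i, ∑ j, ∑ k, ∑ l, if i = l ∧ j = k then v i * v j else 0)
        = (∑ i, v i) ^ 2 := by
      have inner : ∀ i j k : Fin n, (∑ l, if i = l ∧ j = k then v i * v j else 0)
          = if j = k then v i * v j else 0 := by
        intro i j k
        by_cases h : j = k
        · simp [h, Finset.sum_ite_eq]
        · simp [h]
      simp_rw [inner, Finset.sum_ite_eq, Finset.mem_univ, if_true, ← Finset.mul_sum,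
        ← Finset.sum_mul, sq]
    have S4 : (∑ i, ∑ j, ∑ k, ∑ l, if i = j ∧ i = k ∧ i = l then mm i - 3 * v i ^ 2 else 0)
        = (∑ i, mm i) - 3 * ∑ i, v i ^ 2 := by
      have inner : ∀ i j k : Fin n,
          (∑ l, if i = j ∧ i = k ∧ i = l then mm i - 3 * v i ^ 2 else 0)
          = if i = j ∧ i = k then mm i - 3 * v i ^ 2 else 0 := by
        intro i j k
        by_cases h : i = j ∧ i = k
        · obtain ⟨h1, h2⟩ := h
          subst h1
          subst h2
          simp [Finset.sum_ite_eq]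
        · rw [Finset.sum_eq_zero, if_neg h]
          intro l _
          rw [if_neg]
          tauto
      simp_rw [inner]
      have inner2 : ∀ i j : Fin n,
          (∑ k, if i = j ∧ i = k then mm i - 3 * v i ^ 2 else 0)
          = if i = j then mm i - 3 * v i ^ 2 else 0 := by
        intro i j
        by_cases h : i = j
        · simp [h, Finset.sum_ite_eq]
        · rw [Finset.sum_eq_zero, if_neg h]
          intro k _
          rw [if_neg]
          tauto
      simp_rw [inner2, Finset.sum_ite_eq, Finset.mem_univ, if_true,
        Finset.sum_sub_distrib, ← Finset.mul_sum]
    have hFsum : (∑ i, ∑ j, ∑ k, ∑ l, F i j k l)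
        = 3 * (∑ i, v i) ^ 2 + ((∑ i, mm i) - 3 * ∑ i, v i ^ 2) := by
      simp only [hF]
      simp_rw [Finset.sum_add_distrib]
      rw [S1, S2, S3, S4]
      ring
    -- master identity
    have master : ∫ ω, ((∑ i, X i ω) - μ) ^ 4 ∂ℙ
        = 3 * (∑ i, v i) ^ 2 + ((∑ i, mm i) - 3 * ∑ i, v i ^ 2) := by
      have h1 : ∀ ω, (∑ i, X i ω) - μ = ∑ i, Y i ω := by
        intro ω
        rw [hμp, ← Finset.sum_sub_distrib]
      have h2 : (fun ω => ((∑ i, X i ω) - μ) ^ 4)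
          = fun ω => ∑ i, ∑ j, ∑ k, ∑ l, Y i ω * Y j ω * Y k ω * Y l ω := by
        funext ω
        rw [h1 ω]
        rw [show (∑ i, Y i ω) ^ 4
            = (∑ i, Y i ω) * (∑ j, Y j ω) * (∑ k, Y k ω) * (∑ l, Y l ω) from by ring]
        simp only [Finset.sum_mul, Finset.mul_sum]
        exact Finset.sum_congr rfl fun i _ => Finset.sum_congr rfl fun j _ =>
          Finset.sum_congr rfl fun k _ => Finset.sum_congr rfl fun l _ => by ring
      rw [h2]
      rw [integral_finset_sum _ (fun i _ => integrable_finset_sum _ fun j _ =>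
        integrable_finset_sum _ fun k _ => integrable_finset_sum _ fun l _ => hI4 i j k l)]
      rw [← hFsum]
      refine Finset.sum_congr rfl fun i _ => ?_
      rw [integral_finset_sum _ (fun j _ =>
        integrable_finset_sum _ fun k _ => integrable_finset_sum _ fun l _ => hI4 i j k l)]
      refine Finset.sum_congr rfl fun j _ => ?_
      rw [integral_finset_sum _ (fun k _ => integrable_finset_sum _ fun l _ => hI4 i j k l)]
      refine Finset.sum_congr rfl fun k _ => ?_
      rw [integral_finset_sum _ (fun l _ => hI4 i j k l)]
      exact Finset.sum_congr rfl fun l _ => key i j k l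
    -- closed forms for the sums
    have hVv : ∑ i, v i = μ - σ₂ := by
      simp only [hvdef]
      rw [Finset.sum_sub_distrib, ← hμp, ← hσ₂p]
    have hv2sum : ∑ i, v i ^ 2 = σ₂ - 2 * σ₃ + σ₄ := by
      have e : ∀ i, v i ^ 2 = p i ^ 2 - 2 * p i ^ 3 + p i ^ 4 := by
        intro i
        simp only [hvdef]
        ring
      rw [Finset.sum_congr rfl fun i _ => e i]
      rw [Finset.sum_add_distrib, Finset.sum_sub_distrib, ← Finset.mul_sum,
        ← hσ₂p, ← hσ₃p, ← hσ₄def]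
    have hmmsum : ∑ i, mm i = μ - 4 * σ₂ + 6 * σ₃ - 3 * σ₄ := by
      have e : ∀ i, mm i = p i - 4 * p i ^ 2 + 6 * p i ^ 3 - 3 * p i ^ 4 := by
        intro i
        simp only [hmmdef]
        ring
      rw [Finset.sum_congr rfl fun i _ => e i]
      rw [Finset.sum_sub_distrib, Finset.sum_add_distrib, Finset.sum_sub_distrib,
        ← Finset.mul_sum, ← Finset.mul_sum, ← Finset.mul_sum,
        ← hμp, ← hσ₂p, ← hσ₃p, ← hσ₄def]
    rw [master, hVv, hv2sum, hmmsum]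
    nlinarith [hσ₄nonneg, hσ₂nonneg, hσ₂μ, hσ₃μ,
      mul_nonneg hσ₂nonneg (sub_nonneg.mpr hσ₂μ)]
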